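/- arXiv:1904.00166 — 2 statements merged into one kernel-verified Lean document; each statement's English description precedes it below -/
import Mathlib

section
/- Let N ≥ 1 and define σ : Fin N → Fin N → ℂ by σ(i,j) = −1 if i < j and σ(i,j) = +1 if i ≥ j. Define three matrices on (Fin N × Fin N): S_{(i,j),(k,l)} = [i = l]·[j = k]·σ(i,j)·σ(k,l); Flip_{(i,j),(k,l)} = [i = l]·[j = k]; and P_{(i,j),(k,l)} = [i = j]·[j = k]·[k = l] (here [·] is 1 if the condition holds and 0 otherwise). Then S = −Flip + 2·P. -/
theorem stmt_9 (N : ℕ) (hN : 1 ≤ N) :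
    (Matrix.of fun p q : Fin N × Fin N =>
        (if p.1 = q.2 then (1 : ℂ) else 0) * (if p.2 = q.1 then 1 else 0) *
        (if p.1 < p.2 then -1 else 1) * (if q.1 < q.2 then -1 else 1)) =
    -(Matrix.of fun p q : Fin N × Fin N =>
        (if p.1 = q.2 then (1 : ℂ) else 0) * (if p.2 = q.1 then 1 else 0)) +
    2 • (Matrix.of fun p q : Fin N × Fin N =>
        (if p.1 = p.2 then (1 : ℂ) else 0) * (if p.2 = q.1 then 1 else 0) *
        (if q.1 = q.2 then 1 else 0)) := by
  ext ⟨i, j⟩ ⟨k, l⟩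
  simp only [Matrix.add_apply, Matrix.neg_apply, Matrix.smul_apply, Matrix.of_apply]
  by_cases h1 : i = l <;> by_cases h2 : j = k <;> simp [h1, h2] <;>
    first
    | grind
    | (subst h1; subst h2;
       rcases lt_trichotomy i j with h | h | h
       · simp [h, h.not_lt, ne_of_lt h]
       · subst h; simp; ring
       · simp [h, h.not_lt, ne_of_gt h])
end

section
/- Let N ≥ 1 be an integer and define v : Fin N → Fin N → Fin N → ℂ by v(i,j,k) = N²·[i = j ∧ j = k] − N·([i = j] + [j = k] + [i = k]) + 2, where [·] denotes the indicator (1 if true, 0 if false). Then: (a) for every k, ∑_{i} v(i,i,k) = 0; (b) for every i, ∑_{j} v(i,j,j) = 0; (c) for every j, ∑_{i} v(i,j,i) = 0; and (d) for every i, ∑_{j,k} v(i,j,k) = 0. -/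
theorem stmt_11 (N : ℕ) (hN : 1 ≤ N)
    (v : Fin N → Fin N → Fin N → ℂ)
    (hv : ∀ i j k, v i j k =
      (N : ℂ) ^ 2 * (if i = j ∧ j = k then 1 else 0) -
      (N : ℂ) * ((if i = j then 1 else 0) + (if j = k then 1 else 0) +
        (if i = k then 1 else 0)) + 2) :
    (∀ k, ∑ i, v i i k = 0) ∧
    (∀ i, ∑ j, v i j j = 0) ∧
    (∀ j, ∑ i, v i j i = 0) ∧
    (∀ i, ∑ j, ∑ k, v i j k = 0) := by
  have hcard : (Finset.univ : Finset (Fin N)).card = N := Finset.card_fin N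
  refine ⟨?_, ?_, ?_, ?_⟩ <;> intro a <;>
    simp only [hv, Finset.sum_add_distrib, Finset.sum_sub_distrib, ← Finset.mul_sum,
      Finset.sum_ite_eq, Finset.sum_ite_eq', Finset.mem_univ, if_true, and_self,
      eq_comm (a := a)] <;>
    simp [Finset.sum_ite_eq, Finset.sum_ite_eq', hcard, ite_and] <;> ring
end
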